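/- For independent x₁ ~ N(μ₁, σ₁²) and x₂ ~ N(μ₂, σ₂²), the squared maximum mean discrepancy with the RBF kernel k(x,y) = exp(−(x−y)²/δ²) satisfies MMD²(N(μ₁,σ₁²), N(μ₂,σ₂²)) = δ/√(δ² + 4σ₁²) + δ/√(δ² + 4σ₂²) − 2δ·exp(−(μ₁−μ₂)²/(δ² + 2σ₁² + 2σ₂²))/√(δ² + 2σ₁² + 2σ₂²). -/

import Mathlib

open MeasureTheory ProbabilityTheory Real
open scoped NNReal ENNReal

lemma gauss_conv (a b m c : ℝ) (ha : 0 < a) (hb : 0 < b) :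
    ∫ x : ℝ, Real.exp (-a*(x-m)^2 - b*(x-c)^2) =
      Real.sqrt (π/(a+b)) * Real.exp (-(a*b/(a+b))*(m-c)^2) := by
  have hab : 0 < a + b := by positivity
  have h : ∀ x : ℝ, -a*(x-m)^2 - b*(x-c)^2
      = -(a+b)*(x - (a*m+b*c)/(a+b))^2 + (-(a*b/(a+b))*(m-c)^2) := by
    intro x; field_simp; ring
  simp_rw [h, Real.exp_add]
  rw [integral_mul_const,
    integral_sub_right_eq_self (fun y : ℝ => Real.exp (-(a+b)*y^2)) ((a*m+b*c)/(a+b)),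
    integral_gaussian]

lemma integral_gaussianReal_eq (μ : ℝ) (v : ℝ≥0) (hv : v ≠ 0) (g : ℝ → ℝ) :
    ∫ x, g x ∂(gaussianReal μ v) = ∫ x, gaussianPDFReal μ v x * g x := by
  rw [gaussianReal_of_var_ne_zero _ hv]
  have : (gaussianPDF μ v) = fun x => ((gaussianPDFReal μ v x).toNNReal : ℝ≥0∞) := by
    funext x; rfl
  rw [this, integral_withDensity_eq_integral_smul
    ((measurable_gaussianPDFReal μ v).real_toNNReal) g]
  congr 1; funext x
  rw [NNReal.smul_def, smul_eq_mul, Real.coe_toNNReal _ (gaussianPDFReal_nonneg μ v x)]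

lemma var_ne_zero (σ : ℝ) (hσ : 0 < σ) : (⟨σ^2, sq_nonneg σ⟩ : ℝ≥0) ≠ 0 :=
  fun h => (pow_pos hσ 2).ne' (congrArg NNReal.toReal h)

lemma integral_exp_gaussianReal (μ σ c s : ℝ) (hσ : 0 < σ) (hs : 0 < s) :
    ∫ x, Real.exp (-(x-c)^2 / s) ∂(gaussianReal μ ⟨σ^2, sq_nonneg σ⟩)
      = Real.sqrt (s/(s+2*σ^2)) * Real.exp (-(μ-c)^2/(s+2*σ^2)) := by
  have hσ2 : (0:ℝ) < σ^2 := pow_pos hσ 2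
  rw [integral_gaussianReal_eq _ _ (var_ne_zero σ hσ)]
  simp only [gaussianPDFReal]
  change ∫ x, (Real.sqrt (2*π*σ^2))⁻¹ * Real.exp (-(x-μ)^2/(2*σ^2)) * Real.exp (-(x-c)^2/s) = _
  have h1 : ∀ x : ℝ, (Real.sqrt (2*π*σ^2))⁻¹ * Real.exp (-(x-μ)^2/(2*σ^2))
        * Real.exp (-(x-c)^2/s)
      = (Real.sqrt (2*π*σ^2))⁻¹
        * Real.exp (-(1/(2*σ^2))*(x-μ)^2 - (1/s)*(x-c)^2) := by
    intro x
    rw [mul_assoc, ← Real.exp_add]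
    congr 2
    field_simp
    ring
  simp_rw [h1]
  rw [integral_const_mul, gauss_conv _ _ _ _ (by positivity) (by positivity), ← mul_assoc]
  have h2 : (Real.sqrt (2*π*σ^2))⁻¹ * Real.sqrt (π/(1/(2*σ^2)+1/s))
      = Real.sqrt (s/(s+2*σ^2)) := by
    rw [← Real.sqrt_inv, ← Real.sqrt_mul (by positivity)]
    congr 1
    field_simp
  have h3 : -(1/(2*σ^2)*(1/s)/(1/(2*σ^2)+1/s))*(μ-c)^2 = -(μ-c)^2/(s+2*σ^2) := by
    field_simp
  rw [h2, h3]

lemma gaussian_mmd_cross (m₁ m₂ σ₁ σ₂ δ : ℝ) (hσ₁ : 0 < σ₁) (hσ₂ : 0 < σ₂) (hδ : 0 < δ) :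
    (∫ p : ℝ × ℝ, Real.exp (-(p.1 - p.2) ^ 2 / δ ^ 2)
        ∂((gaussianReal m₁ ⟨σ₁ ^ 2, sq_nonneg σ₁⟩).prod
          (gaussianReal m₂ ⟨σ₂ ^ 2, sq_nonneg σ₂⟩)))
      = δ * Real.exp (-(m₁ - m₂)^2 / (δ^2 + 2*σ₁^2 + 2*σ₂^2))
        / Real.sqrt (δ^2 + 2*σ₁^2 + 2*σ₂^2) := by
  haveI : IsProbabilityMeasure (gaussianReal m₁ ⟨σ₁ ^ 2, sq_nonneg σ₁⟩) :=
    instIsProbabilityMeasureGaussianReal _ _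
  haveI : IsProbabilityMeasure (gaussianReal m₂ ⟨σ₂ ^ 2, sq_nonneg σ₂⟩) :=
    instIsProbabilityMeasureGaussianReal _ _
  have hint : Integrable (fun p : ℝ × ℝ => Real.exp (-(p.1 - p.2) ^ 2 / δ ^ 2))
      ((gaussianReal m₁ ⟨σ₁ ^ 2, sq_nonneg σ₁⟩).prod
        (gaussianReal m₂ ⟨σ₂ ^ 2, sq_nonneg σ₂⟩)) := by
    refine (integrable_const (1:ℝ)).mono' ?_ (ae_of_all _ fun p => ?_)
    · exact (Real.continuous_exp.comp
        (((continuous_fst.sub continuous_snd).pow 2).neg.div_const _)).aestronglyMeasurable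
    · rw [Real.norm_eq_abs, abs_of_pos (Real.exp_pos _)]
      exact Real.exp_le_one_iff.2
        (div_nonpos_of_nonpos_of_nonneg (neg_nonpos.2 (sq_nonneg _)) (sq_nonneg δ))
  rw [integral_prod _ hint]
  have inner : ∀ x : ℝ, (∫ y, Real.exp (-(x - y)^2/δ^2) ∂gaussianReal m₂ ⟨σ₂^2, sq_nonneg σ₂⟩)
      = Real.sqrt (δ^2/(δ^2+2*σ₂^2)) * Real.exp (-(x-m₂)^2/(δ^2+2*σ₂^2)) := by
    intro x
    have h : ∀ y : ℝ, -(x - y)^2/δ^2 = -(y-x)^2/δ^2 := fun y => by ring_nf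
    simp_rw [h]
    rw [integral_exp_gaussianReal m₂ σ₂ x (δ^2) hσ₂ (by positivity)]
    congr 2
    ring
  simp_rw [inner]
  rw [integral_const_mul, integral_exp_gaussianReal m₁ σ₁ m₂ (δ^2+2*σ₂^2) hσ₁ (by positivity),
    ← mul_assoc, ← Real.sqrt_mul (by positivity)]
  have e1 : δ^2/(δ^2+2*σ₂^2) * ((δ^2+2*σ₂^2)/(δ^2+2*σ₂^2+2*σ₁^2))
      = δ^2/(δ^2+2*σ₁^2+2*σ₂^2) := by
    have h2 : (0:ℝ) < δ^2+2*σ₂^2 := by positivity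
    have h3 : (0:ℝ) < δ^2+2*σ₂^2+2*σ₁^2 := by positivity
    field_simp
    ring
  have e2 : δ^2+2*σ₂^2+2*σ₁^2 = δ^2+2*σ₁^2+2*σ₂^2 := by ring
  rw [e1, e2, Real.sqrt_div (sq_nonneg δ), Real.sqrt_sq hδ.le]
  ring

/-- The squared MMD with RBF kernel k(x,y) = exp(−(x−y)²/δ²) between
N(μ₁,σ₁²) and N(μ₂,σ₂²):
MMD² = E_{x,x'~P}[k(x,x')] + E_{y,y'~Q}[k(y,y')] − 2E_{x~P,y~Q}[k(x,y)]
     = δ/√(δ²+4σ₁²) + δ/√(δ²+4σ₂²) − 2δ·exp(−(μ₁−μ₂)²/(δ²+2σ₁²+2σ₂²))/√(δ²+2σ₁²+2σ₂²). -/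
theorem gaussian_mmd_rbf (μ₁ μ₂ σ₁ σ₂ δ : ℝ)
    (hσ₁ : 0 < σ₁) (hσ₂ : 0 < σ₂) (hδ : 0 < δ) :
    (∫ p : ℝ × ℝ, Real.exp (-(p.1 - p.2) ^ 2 / δ ^ 2)
        ∂((gaussianReal μ₁ ⟨σ₁ ^ 2, sq_nonneg σ₁⟩).prod
          (gaussianReal μ₁ ⟨σ₁ ^ 2, sq_nonneg σ₁⟩))) +
      (∫ p : ℝ × ℝ, Real.exp (-(p.1 - p.2) ^ 2 / δ ^ 2)
        ∂((gaussianReal μ₂ ⟨σ₂ ^ 2, sq_nonneg σ₂⟩).prod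
          (gaussianReal μ₂ ⟨σ₂ ^ 2, sq_nonneg σ₂⟩))) -
      2 * (∫ p : ℝ × ℝ, Real.exp (-(p.1 - p.2) ^ 2 / δ ^ 2)
        ∂((gaussianReal μ₁ ⟨σ₁ ^ 2, sq_nonneg σ₁⟩).prod
          (gaussianReal μ₂ ⟨σ₂ ^ 2, sq_nonneg σ₂⟩))) =
    δ / Real.sqrt (δ ^ 2 + 4 * σ₁ ^ 2) + δ / Real.sqrt (δ ^ 2 + 4 * σ₂ ^ 2) -
      2 * δ * Real.exp (-(μ₁ - μ₂) ^ 2 / (δ ^ 2 + 2 * σ₁ ^ 2 + 2 * σ₂ ^ 2)) /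
        Real.sqrt (δ ^ 2 + 2 * σ₁ ^ 2 + 2 * σ₂ ^ 2) := by
  rw [gaussian_mmd_cross μ₁ μ₁ σ₁ σ₁ δ hσ₁ hσ₁ hδ,
    gaussian_mmd_cross μ₂ μ₂ σ₂ σ₂ δ hσ₂ hσ₂ hδ,
    gaussian_mmd_cross μ₁ μ₂ σ₁ σ₂ δ hσ₁ hσ₂ hδ]
  have e1 : δ^2+2*σ₁^2+2*σ₁^2 = δ^2+4*σ₁^2 := by ring
  have e2 : δ^2+2*σ₂^2+2*σ₂^2 = δ^2+4*σ₂^2 := by ring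
  rw [e1, e2]
  have h0 : ∀ m s : ℝ, Real.exp (-(m - m) ^ 2 / s) = 1 := by intro m s; simp
  rw [h0, h0]
  ring
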